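/- Let F : J → Cat be a functor from a small category to the category of small categories with colimit L, and let X be the colimit in simplicial sets of the composite N ∘ F, where N is the nerve functor. Then the canonical map X → N(L) is a bijection on 0-simplices. -/

import Mathlib

open CategoryTheory Simplicial Opposite Limits

universe u

namespace NerveColimAux

/-- The chaotic (indiscrete) category on a type. -/
def Chaotic (X : Type u) : Type u := X

instance (X : Type u) : Category.{u} (Chaotic X) where
  Hom _ _ := PUnit
  id _ := ⟨⟩
  comp _ _ := ⟨⟩

instance (X : Type u) (a b : Chaotic X) : Subsingleton (a ⟶ b) :=
  inferInstanceAs (Subsingleton PUnit)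

/-- The chaotic category functor, right adjoint to `Cat.objects`. -/
def chaoticFunctor : Type u ⥤ Cat.{u, u} where
  obj X := Cat.of (Chaotic X)
  map f := Functor.toCatHom { obj := f, map := fun _ => ⟨⟩ }
  map_id _ := Cat.ext (CategoryTheory.Functor.ext (fun _ => rfl) (fun _ _ _ => rfl))
  map_comp _ _ := Cat.ext (CategoryTheory.Functor.ext (fun _ => rfl) (fun _ _ _ => rfl))

/-- `Cat.objects` is left adjoint to the chaotic category functor. -/
def objectsAdj : Cat.objects.{u, u} ⊣ chaoticFunctor.{u} :=
  Adjunction.mkOfHomEquiv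
    { homEquiv := fun C X =>
        { toFun := fun f => Functor.toCatHom { obj := f, map := fun _ => ⟨⟩ }
          invFun := fun g => ↾g.toFunctor.obj
          left_inv := fun _ => rfl
          right_inv := fun g => Cat.ext (CategoryTheory.Functor.ext (fun _ => rfl)
            (fun _ _ _ => rfl)) }
      homEquiv_naturality_left_symm := fun _ _ => rfl
      homEquiv_naturality_right := fun _ _ =>
        Cat.ext (CategoryTheory.Functor.ext (fun _ => rfl) (fun _ _ _ => rfl)) }

instance : PreservesColimits Cat.objects.{u, u} :=
  objectsAdj.leftAdjoint_preservesColimits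

/-- The nerve functor evaluated at `[0]` is naturally isomorphic to `Cat.objects`. -/
def nerveEvZeroIso :
    nerveFunctor.{u, u} ⋙ (evaluation SimplexCategoryᵒᵖ (Type u)).obj
      (op (⦋0⦌ : SimplexCategory)) ≅ Cat.objects.{u, u} :=
  NatIso.ofComponents
    (fun C => Equiv.toIso
      { toFun := fun G => G.obj' 0
        invFun := ComposableArrows.mk₀
        left_inv := fun G => ComposableArrows.ext₀ (F := ComposableArrows.mk₀ (G.obj' 0)) (G := G) rfl
        right_inv := fun _ => rfl })
    (fun _ => rfl)

end NerveColimAux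

/-- Let `F : J ⥤ Cat` have colimit `c.pt`, and let `X` be the colimit in simplicial sets of
`F ⋙ N`, where `N` is the nerve functor. The canonical map `X ⟶ N(c.pt)` is a bijection
on `0`-simplices. -/
theorem nerve_colimit_comparison_bijective_degree_zero
    {J : Type u} [SmallCategory J] (F : J ⥤ Cat.{u, u})
    (c : Cocone F) (hc : IsColimit c) :
    Function.Bijective
      ((colimit.desc (F ⋙ nerveFunctor.{u, u}) (nerveFunctor.{u, u}.mapCocone c)).app
        (op (⦋0⦌ : SimplexCategory))) := by
  let ev := (evaluation SimplexCategoryᵒᵖ (Type u)).obj (op (⦋0⦌ : SimplexCategory))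
  rw [← isIso_iff_bijective]
  have t1 : IsColimit (ev.mapCocone (colimit.cocone (F ⋙ nerveFunctor.{u, u}))) :=
    isColimitOfPreserves ev (colimit.isColimit _)
  haveI : PreservesColimits (nerveFunctor.{u, u} ⋙ ev) :=
    preservesColimits_of_natIso NerveColimAux.nerveEvZeroIso.symm
  have t2 : IsColimit (ev.mapCocone (nerveFunctor.{u, u}.mapCocone c)) :=
    isColimitOfPreserves (nerveFunctor.{u, u} ⋙ ev) hc
  let φ : ev.mapCocone (colimit.cocone (F ⋙ nerveFunctor.{u, u})) ⟶
      ev.mapCocone (nerveFunctor.{u, u}.mapCocone c) :=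
    { hom := (colimit.desc (F ⋙ nerveFunctor.{u, u}) (nerveFunctor.{u, u}.mapCocone c)).app
        (op (⦋0⦌ : SimplexCategory))
      w := fun j => by
        dsimp [ev]
        rw [← NatTrans.comp_app, colimit.ι_desc]; rfl }
  haveI := t1.hom_isIso t2 φ
  exact inferInstanceAs (IsIso ((Cocones.forget _).map φ))
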